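/- General trade-off bound: Let H : ℝ^d → ℝ^y satisfy K_L‖x₁-x₂‖ ≤ ‖H(x₁)-H(x₂)‖ ≤ K_U‖x₁-x₂‖ with 0 < K_L ≤ K_U. Let x, x₁, x₂ be random vectors drawn from a natural-image distribution with M = E[‖x₁-x₂‖], and δ ~ N(0, β²I_d) independent. Fix τ > 0 and set α_det = P[‖H(x)-H(x+δ)‖ ≤ τ], α_fp = P[‖H(x₁)-H(x₂)‖ ≤ τ], with α_fp < 1. Then α_det ≤ (1/Γ(d/2)) · γ(d/2, (1/2)·((K_U/K_L)·(M/β)·1/(1-α_fp))²). -/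

import Mathlib

open MeasureTheory ProbabilityTheory

/-- The lower incomplete gamma function `γ(s, x) = ∫₀ˣ t^(s-1) e^(-t) dt`. -/
noncomputable def lowerIncompleteGamma (s x : ℝ) : ℝ :=
  ∫ t in Set.Ioc 0 x, t ^ (s - 1) * Real.exp (-t)



open Set Metric
open scoped ENNReal NNReal Real

lemma lintegral_pi_prod {n : ℕ} (f : Fin n → ℝ → ℝ≥0∞) (hf : ∀ i, Measurable (f i)) :
    ∫⁻ x : Fin n → ℝ, ∏ i, f i (x i) = ∏ i, ∫⁻ x, f i x := by
  induction n with
  | zero => simp [volume_pi]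
  | succ n ih =>
    have hmp := (measurePreserving_piFinSuccAbove (fun _ : Fin (n+1) => (volume : Measure ℝ)) 0).symm
    rw [volume_pi, ← hmp.map_eq, lintegral_map_equiv]
    have heq : ∀ y : ℝ × (Fin n → ℝ),
        (∏ i, f i ((MeasurableEquiv.piFinSuccAbove (fun _ : Fin (n+1) => ℝ) 0).symm y i))
        = f 0 y.1 * ∏ i : Fin n, f i.succ (y.2 i) := by
      intro y
      simp [MeasurableEquiv.piFinSuccAbove_symm_apply, Fin.prod_univ_succ, Fin.zero_succAbove]
    simp_rw [heq]
    have hg : Measurable fun x : Fin n → ℝ => ∏ i, f i.succ (x i) :=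
      Finset.measurable_prod Finset.univ fun i _ => (hf i.succ).comp (measurable_pi_apply i)
    rw [lintegral_prod_mul (f := f 0) (g := fun x : Fin n → ℝ => ∏ i, f i.succ (x i))
      (hf 0).aemeasurable hg.aemeasurable]
    rw [show (Measure.pi fun _ : Fin n => (volume : Measure ℝ)) = (volume : Measure (Fin n → ℝ))
      from (volume_pi).symm]
    rw [ih (fun i => f i.succ) (fun i => hf i.succ), Fin.prod_univ_succ]

lemma pi_gauss_withDensity {d : ℕ} (V : ℝ≥0) (hV : V ≠ 0) :
    Measure.pi (fun _ : Fin d => gaussianReal 0 V)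
      = (volume : Measure (Fin d → ℝ)).withDensity (fun z => ∏ i, gaussianPDF 0 V (z i)) := by
  refine Measure.pi_eq fun s hs => ?_
  rw [withDensity_apply _ (MeasurableSet.univ_pi hs)]
  have hind : (univ.pi s).indicator (fun z : Fin d → ℝ => ∏ i, gaussianPDF 0 V (z i))
      = fun z => ∏ i, (s i).indicator (gaussianPDF 0 V) (z i) := by
    funext z
    by_cases hz : z ∈ univ.pi s
    · rw [indicator_of_mem hz]
      exact Finset.prod_congr rfl fun i _ => (indicator_of_mem (hz i (Set.mem_univ i)) _).symm
    · rw [indicator_of_notMem hz]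
      have : ∃ i, z i ∉ s i := by
        by_contra hc
        push_neg at hc
        exact hz fun i _ => hc i
      obtain ⟨i, hi⟩ := this
      exact (Finset.prod_eq_zero (Finset.mem_univ i) (by rw [indicator_of_notMem hi])).symm
  rw [lintegral_indicator (MeasurableSet.univ_pi hs) _ |>.symm] <;> try skip
  rw [hind,
    lintegral_pi_prod _ (fun i => (measurable_gaussianPDF 0 V).indicator (hs i))]
  refine Finset.prod_congr rfl fun i _ => ?_
  rw [lintegral_indicator (hs i) _, gaussianReal_of_var_ne_zero 0 hV,
    withDensity_apply _ (hs i)]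

lemma map_delta_pi {Ω : Type*} [MeasureSpace Ω] [IsProbabilityMeasure (ℙ : Measure Ω)]
    {d : ℕ} (V : ℝ≥0) (δ : Ω → EuclideanSpace ℝ (Fin d))
    (hδmeas : ∀ i, Measurable fun ω => δ ω i)
    (hδindep : iIndepFun (fun i ω => δ ω i) ℙ)
    (hδdist : ∀ i, Measure.map (fun ω => δ ω i) ℙ = gaussianReal 0 V) :
    Measure.map (fun ω i => δ ω i) ℙ = Measure.pi (fun _ : Fin d => gaussianReal 0 V) := by
  have hmeas : Measurable (fun ω i => δ ω i) := measurable_pi_lambda _ hδmeas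
  refine (Measure.pi_eq fun s hs => ?_).symm
  rw [Measure.map_apply hmeas (MeasurableSet.univ_pi hs)]
  have hpre : (fun ω i => δ ω i) ⁻¹' (univ.pi s) = ⋂ i, (fun ω => δ ω i) ⁻¹' (s i) := by
    ext ω; simp [Set.mem_univ_pi]
  rw [hpre, hδindep.meas_iInter fun i => ⟨s i, hs i, rfl⟩]
  exact Finset.prod_congr rfl fun i _ => by
    rw [← hδdist i, Measure.map_apply (hδmeas i) (hs i)]

lemma prob_norm_le {Ω : Type*} [MeasureSpace Ω] [IsProbabilityMeasure (ℙ : Measure Ω)]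
    {d : ℕ} {β : ℝ} (hβ : 0 < β) (δ : Ω → EuclideanSpace ℝ (Fin d))
    (hδmeas : ∀ i, Measurable fun ω => δ ω i)
    (hδindep : iIndepFun (fun i ω => δ ω i) ℙ)
    (hδdist : ∀ i, Measure.map (fun ω => δ ω i) ℙ = gaussianReal 0 (β ^ 2).toNNReal)
    (c : ℝ) :
    ℙ {ω | ‖δ ω‖ ≤ c} = ∫⁻ w in Metric.closedBall (0 : EuclideanSpace ℝ (Fin d)) c,
      ENNReal.ofReal ((Real.sqrt (2 * π * β ^ 2))⁻¹ ^ d * Real.exp (-‖w‖ ^ 2 / (2 * β ^ 2)))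
      ∂volume := by
  set V : ℝ≥0 := (β ^ 2).toNNReal with hVdef
  have hV : V ≠ 0 := by
    simp [hVdef, Real.toNNReal_eq_zero, not_le, pow_pos hβ, hβ.ne']
  have hVc : (V : ℝ) = β ^ 2 := Real.coe_toNNReal _ (by positivity)
  set e := (MeasurableEquiv.toLp 2 (Fin d → ℝ)).symm with he
  have hmeas : Measurable (fun ω i => δ ω i) := measurable_pi_lambda _ hδmeas
  have hesymm : ∀ ω, e.symm (fun i => δ ω i) = δ ω := by
    intro ω
    rfl
  set S : Set (Fin d → ℝ) := e.symm ⁻¹' (Metric.closedBall 0 c) with hS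
  have hSmeas : MeasurableSet S := e.symm.measurable measurableSet_closedBall
  have hev : {ω | ‖δ ω‖ ≤ c} = (fun ω i => δ ω i) ⁻¹' S := by
    ext ω
    simp only [mem_setOf_eq, mem_preimage, hS, hesymm ω, Metric.mem_closedBall,
      dist_zero_right]
  rw [hev, ← Measure.map_apply hmeas hSmeas, map_delta_pi V δ hδmeas hδindep hδdist,
    pi_gauss_withDensity V hV, withDensity_apply _ hSmeas,
    ← lintegral_indicator hSmeas _]
  have hvol : (volume : Measure (Fin d → ℝ)) = Measure.map e volume :=
    ((EuclideanSpace.volume_preserving_symm_measurableEquiv_toLp (Fin d)).map_eq).symm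
  rw [hvol, lintegral_map_equiv]
  rw [← lintegral_indicator (measurableSet_closedBall (x := (0:EuclideanSpace ℝ (Fin d))) (ε := c)) _]
  congr 1
  funext w
  have hew : e.symm (e w) = w := e.symm_apply_apply w
  have hmem : e w ∈ S ↔ w ∈ Metric.closedBall (0 : EuclideanSpace ℝ (Fin d)) c := by
    rw [hS, mem_preimage, hew]
  by_cases hw : w ∈ Metric.closedBall (0 : EuclideanSpace ℝ (Fin d)) c
  · rw [indicator_of_mem (hmem.mpr hw), indicator_of_mem hw]
    have hewi : ∀ i, e w i = w i := fun i => rfl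
    simp_rw [hewi]
    rw [show (∏ i, gaussianPDF 0 V (w i)) = ENNReal.ofReal (∏ i, gaussianPDFReal 0 V (w i)) by
      rw [ENNReal.ofReal_prod_of_nonneg fun i _ => gaussianPDFReal_nonneg 0 V (w i)]; rfl]
    congr 1
    simp_rw [gaussianPDFReal, sub_zero, hVc]
    rw [Finset.prod_mul_distrib, Finset.prod_const, ← Real.exp_sum]
    congr 2
    · rw [Finset.card_univ, Fintype.card_fin]
    · have hnorm : ‖w‖ ^ 2 = ∑ i, w i ^ 2 := by
        rw [EuclideanSpace.norm_eq, Real.sq_sqrt (Finset.sum_nonneg fun i _ => sq_nonneg _)]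
        exact Finset.sum_congr rfl fun i _ => sq_abs _
      rw [hnorm, neg_div, ← Finset.sum_div, Finset.sum_neg_distrib, neg_div]
  · rw [indicator_of_notMem (fun h => hw (hmem.mp h)), indicator_of_notMem hw]

lemma gauss_radial_integral {d : ℕ} (hd : 0 < d) {β c : ℝ} (hβ : 0 < β) (hc : 0 ≤ c) :
    ∫ y in Ioc (0:ℝ) c, y ^ (d - 1) * Real.exp (-y ^ 2 / (2 * β ^ 2))
      = β ^ 2 * (2 * β ^ 2) ^ ((d : ℝ) / 2 - 1)
        * lowerIncompleteGamma ((d : ℝ) / 2) (c ^ 2 / (2 * β ^ 2)) := by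
  have hb2 : (0:ℝ) < 2 * β ^ 2 := by positivity
  set T : ℝ := c ^ 2 / (2 * β ^ 2) with hT
  set φ : ℝ → ℝ := fun y => y ^ 2 / (2 * β ^ 2) with hφ
  have himg : φ '' Ioc 0 c = Ioc 0 T := by
    ext t
    constructor
    · rintro ⟨y, ⟨hy0, hyc⟩, rfl⟩
      refine ⟨by positivity, ?_⟩
      simp only [hφ, hT]
      gcongr
    · rintro ⟨ht0, htT⟩
      refine ⟨Real.sqrt (2 * β ^ 2 * t), ⟨by positivity, ?_⟩, ?_⟩
      · have h1 : 2 * β ^ 2 * t ≤ c ^ 2 := by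
          rw [hT] at htT
          calc 2 * β ^ 2 * t ≤ 2 * β ^ 2 * (c ^ 2 / (2 * β ^ 2)) := by gcongr
          _ = c ^ 2 := by field_simp
        calc Real.sqrt (2 * β ^ 2 * t) ≤ Real.sqrt (c ^ 2) := Real.sqrt_le_sqrt h1
        _ = c := Real.sqrt_sq hc
      · rw [hφ]
        simp only
        rw [Real.sq_sqrt (by positivity)]
        field_simp
  have hderiv : ∀ y ∈ Ioc (0:ℝ) c, HasDerivWithinAt φ (y / β ^ 2) (Ioc 0 c) y := by
    intro y _
    have : HasDerivAt φ (y / β ^ 2) y := by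
      have h := (hasDerivAt_pow 2 y).div_const (2 * β ^ 2)
      refine h.congr_deriv ?_
      push_cast
      field_simp
    exact this.hasDerivWithinAt
  have hinj : InjOn φ (Ioc 0 c) := by
    intro a ha b hb hab
    have ha2 : a ^ 2 = b ^ 2 := by
      simp only [hφ] at hab
      exact (div_left_inj' hb2.ne').mp hab
    calc a = Real.sqrt (a ^ 2) := (Real.sqrt_sq ha.1.le).symm
    _ = Real.sqrt (b ^ 2) := by rw [ha2]
    _ = b := Real.sqrt_sq hb.1.le
  have hsub := integral_image_eq_integral_abs_deriv_smul measurableSet_Ioc hderiv hinj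
    (fun t => t ^ ((d : ℝ) / 2 - 1) * Real.exp (-t))
  rw [himg] at hsub
  rw [lowerIncompleteGamma, hsub]
  rw [← integral_const_mul]
  refine setIntegral_congr_fun measurableSet_Ioc fun y hy => ?_
  have hy0 : 0 < y := hy.1
  have habs : |y / β ^ 2| = y / β ^ 2 := abs_of_pos (by positivity)
  rw [smul_eq_mul, habs, hφ]
  simp only
  have hrp : (y ^ 2 / (2 * β ^ 2)) ^ ((d : ℝ) / 2 - 1)
      = y ^ ((d : ℝ) - 2) / (2 * β ^ 2) ^ ((d : ℝ) / 2 - 1) := by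
    rw [Real.div_rpow (by positivity) hb2.le]
    congr 1
    rw [← Real.rpow_natCast y 2, ← Real.rpow_mul hy0.le]
    congr 1
    ring
  rw [hrp]
  have hnat : (y : ℝ) ^ (d - 1) = y ^ ((d : ℝ) - 1) := by
    rw [← Real.rpow_natCast y (d - 1), Nat.cast_sub hd, Nat.cast_one]
  rw [hnat]
  have hyy : y * y ^ ((d:ℝ) - 2) = y ^ ((d:ℝ) - 1) := by
    nth_rewrite 1 [← Real.rpow_one y]
    rw [← Real.rpow_add hy0]
    congr 1
    ring
  rw [← hyy, neg_div]
  have hne : (2 * β ^ 2) ^ ((d:ℝ)/2 - 1) ≠ 0 := (Real.rpow_pos_of_pos (by positivity) _).ne'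
  field_simp

lemma chi_const {d : ℕ} (hd : 0 < d) {β : ℝ} (hβ : 0 < β) :
    (d : ℝ) * (Real.sqrt π ^ d / Real.Gamma ((d:ℝ) / 2 + 1))
      * ((Real.sqrt (2 * π * β ^ 2))⁻¹ ^ d * (β ^ 2 * (2 * β ^ 2) ^ ((d : ℝ) / 2 - 1)))
      = 1 / Real.Gamma ((d:ℝ) / 2) := by
  have hπ : (0:ℝ) < π := Real.pi_pos
  have hb2 : (0:ℝ) < 2 * β ^ 2 := by positivity
  set p : ℝ := (d : ℝ) / 2 with hp
  have hp0 : 0 < p := by positivity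
  have h1 : Real.sqrt π ^ d = π ^ p := by
    rw [Real.sqrt_eq_rpow, ← Real.rpow_natCast (π ^ ((1:ℝ)/2)) d, ← Real.rpow_mul hπ.le]
    congr 1
    rw [hp]; ring
  have hx : Real.sqrt (2 * π * β ^ 2) ^ d = (2 * β ^ 2) ^ p * π ^ p := by
    rw [Real.sqrt_eq_rpow, ← Real.rpow_natCast ((2*π*β^2) ^ ((1:ℝ)/2)) d,
      ← Real.rpow_mul (by positivity)]
    rw [show (1:ℝ)/2 * d = p by rw [hp]; ring]
    rw [show (2*π*β^2:ℝ) = (2*β^2)*π by ring, Real.mul_rpow hb2.le hπ.le]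
  have h2 : (Real.sqrt (2 * π * β ^ 2))⁻¹ ^ d = ((2*β^2)^p * π^p)⁻¹ := by
    rw [inv_pow, hx]
  have h3 : (2*β^2 : ℝ) ^ (p - 1) = (2*β^2) ^ p / (2*β^2) := by
    rw [Real.rpow_sub hb2, Real.rpow_one]
  have h4 : Real.Gamma (p + 1) = p * Real.Gamma p := Real.Gamma_add_one hp0.ne'
  have hΓ : Real.Gamma p ≠ 0 := (Real.Gamma_pos_of_pos hp0).ne'
  have hd2 : (d : ℝ) = 2 * p := by rw [hp]; ring
  rw [h1, h2, h3, h4, hd2]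
  have hpp : (π:ℝ) ^ p ≠ 0 := (Real.rpow_pos_of_pos hπ _).ne'
  have hbp : (2*β^2 : ℝ) ^ p ≠ 0 := (Real.rpow_pos_of_pos hb2 _).ne'
  field_simp

lemma chi_cdf {d : ℕ} (hd : 0 < d) {β c : ℝ} (hβ : 0 < β) (hc : 0 ≤ c) :
    (∫⁻ w in Metric.closedBall (0 : EuclideanSpace ℝ (Fin d)) c,
      ENNReal.ofReal ((Real.sqrt (2 * π * β ^ 2))⁻¹ ^ d * Real.exp (-‖w‖ ^ 2 / (2 * β ^ 2)))
      ∂volume).toReal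
    = lowerIncompleteGamma ((d:ℝ) / 2) (c ^ 2 / (2 * β ^ 2)) / Real.Gamma ((d:ℝ) / 2) := by
  have hπ : (0:ℝ) < π := Real.pi_pos
  set A : ℝ := (Real.sqrt (2 * π * β ^ 2))⁻¹ with hA
  have hA0 : 0 ≤ A := by rw [hA]; positivity
  set g : ℝ → ℝ := fun r => A ^ d * Real.exp (-r ^ 2 / (2 * β ^ 2)) with hg
  have hgnn : ∀ r, 0 ≤ g r := fun r => by rw [hg]; positivity
  have hgcont : Continuous fun w : EuclideanSpace ℝ (Fin d) => g ‖w‖ := by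
    rw [hg]
    fun_prop
  have hBmeas : MeasurableSet (Metric.closedBall (0 : EuclideanSpace ℝ (Fin d)) c) :=
    measurableSet_closedBall
  have hIntOn : IntegrableOn (fun w : EuclideanSpace ℝ (Fin d) => g ‖w‖)
      (Metric.closedBall 0 c) volume :=
    ContinuousOn.integrableOn_compact (isCompact_closedBall _ _) hgcont.continuousOn
  -- lintegral to integral
  have h1 : (∫⁻ w in Metric.closedBall (0 : EuclideanSpace ℝ (Fin d)) c,
        ENNReal.ofReal (g ‖w‖) ∂volume)
      = ENNReal.ofReal (∫ w in Metric.closedBall (0 : EuclideanSpace ℝ (Fin d)) c, g ‖w‖) :=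
    (ofReal_integral_eq_lintegral_ofReal hIntOn (ae_of_all _ fun w => hgnn ‖w‖)).symm
  rw [show (fun w : EuclideanSpace ℝ (Fin d) =>
      ENNReal.ofReal ((Real.sqrt (2 * π * β ^ 2))⁻¹ ^ d * Real.exp (-‖w‖ ^ 2 / (2 * β ^ 2))))
      = fun w => ENNReal.ofReal (g ‖w‖) from rfl] at *
  rw [h1, ENNReal.toReal_ofReal (setIntegral_nonneg hBmeas fun w _ => hgnn ‖w‖)]
  -- to indicator form
  have hF : ∀ w : EuclideanSpace ℝ (Fin d),
      (Metric.closedBall (0:EuclideanSpace ℝ (Fin d)) c).indicator (fun w => g ‖w‖) w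
        = (Iic c).indicator g ‖w‖ := by
    intro w
    by_cases hw : w ∈ Metric.closedBall (0:EuclideanSpace ℝ (Fin d)) c
    · rw [indicator_of_mem hw, indicator_of_mem (by
        simpa [mem_closedBall, dist_zero_right] using hw)]
    · rw [indicator_of_notMem hw, indicator_of_notMem (by
        simpa [mem_closedBall, dist_zero_right] using hw)]
  rw [← integral_indicator hBmeas]
  rw [show (fun w : EuclideanSpace ℝ (Fin d) =>
      (Metric.closedBall (0:EuclideanSpace ℝ (Fin d)) c).indicator (fun w => g ‖w‖) w)
      = fun w => (Iic c).indicator g ‖w‖ from funext hF]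
  -- radial formula
  haveI : Nontrivial (EuclideanSpace ℝ (Fin d)) := by
    refine ⟨0, EuclideanSpace.single ⟨0, hd⟩ 1, fun h => ?_⟩
    have := congrArg (fun v : EuclideanSpace ℝ (Fin d) => v ⟨0, hd⟩) h
    simp [EuclideanSpace.single_apply] at this
  rw [integral_fun_norm_addHaar (volume : Measure (EuclideanSpace ℝ (Fin d)))
    ((Iic c).indicator g)]
  rw [finrank_euclideanSpace_fin]
  -- inner integral
  have h2 : ∫ y in Ioi (0:ℝ), y ^ (d - 1) • (Iic c).indicator g y
      = ∫ y in Ioc (0:ℝ) c, y ^ (d - 1) * g y := by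
    rw [show (fun y : ℝ => y ^ (d - 1) • (Iic c).indicator g y)
        = fun y => (Iic c).indicator (fun y => y ^ (d-1) * g y) y from funext fun y => by
      by_cases hy : y ∈ Iic c
      · rw [indicator_of_mem hy, indicator_of_mem hy, smul_eq_mul]
      · rw [indicator_of_notMem hy, indicator_of_notMem hy, smul_eq_mul, mul_zero]]
    rw [setIntegral_indicator measurableSet_Iic, Ioi_inter_Iic]
  rw [h2]
  have h3 : ∫ y in Ioc (0:ℝ) c, y ^ (d - 1) * g y
      = A ^ d * (β ^ 2 * (2 * β ^ 2) ^ ((d : ℝ) / 2 - 1)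
          * lowerIncompleteGamma ((d : ℝ) / 2) (c ^ 2 / (2 * β ^ 2))) := by
    rw [← gauss_radial_integral hd hβ hc, ← integral_const_mul]
    exact setIntegral_congr_fun measurableSet_Ioc fun y _ => by rw [hg]; ring
  rw [h3]
  -- volume of unit ball
  haveI : Nonempty (Fin d) := ⟨⟨0, hd⟩⟩
  have h4 : ((volume (Metric.ball (0:EuclideanSpace ℝ (Fin d)) 1)).toReal
      = Real.sqrt π ^ d / Real.Gamma ((d:ℝ) / 2 + 1)) := by
    rw [EuclideanSpace.volume_ball (ι := Fin d) 0 1]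
    rw [ENNReal.toReal_mul, ENNReal.toReal_pow, ENNReal.toReal_ofReal zero_le_one]
    rw [ENNReal.toReal_ofReal (by positivity)]
    simp [Fintype.card_fin]
  rw [Measure.real_def, h4, nsmul_eq_mul, smul_eq_mul]
  have := chi_const hd hβ (d := d)
  rw [div_eq_mul_one_div (lowerIncompleteGamma ((d:ℝ)/2) (c^2/(2*β^2))), ← this, ← hA]
  ring

lemma lig_nonneg (s x : ℝ) : 0 ≤ lowerIncompleteGamma s x :=
  setIntegral_nonneg measurableSet_Ioc fun t ht =>
    mul_nonneg (Real.rpow_nonneg ht.1.le _) (Real.exp_nonneg _)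

lemma lig_mono {s : ℝ} (hs : 0 < s) {a b : ℝ} (hab : a ≤ b) :
    lowerIncompleteGamma s a ≤ lowerIncompleteGamma s b := by
  have hint : IntegrableOn (fun t : ℝ => t ^ (s - 1) * Real.exp (-t)) (Ioc 0 b) volume := by
    refine ((Real.GammaIntegral_convergent hs).mono_set Ioc_subset_Ioi_self).congr ?_
    exact ae_of_all _ fun t => mul_comm _ _
  refine setIntegral_mono_set hint ?_ (HasSubset.Subset.eventuallyLE (Ioc_subset_Ioc_right hab))
  filter_upwards [ae_restrict_mem measurableSet_Ioc] with t ht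
  exact mul_nonneg (Real.rpow_nonneg ht.1.le _) (Real.exp_nonneg _)

/-- General trade-off bound: for a bi-Lipschitz feature extractor `H` with constants
`0 < K_L ≤ K_U`, natural queries `x, x₁, x₂` with `M = E[‖x₁ - x₂‖]`, Gaussian perturbation
`δ ~ N(0, β² I_d)`, threshold `τ > 0`, detection rate `α_det = P[‖H(x) - H(x+δ)‖ ≤ τ]`
and false positive rate `α_fp = P[‖H(x₁) - H(x₂)‖ ≤ τ] < 1`:
`α_det ≤ γ(d/2, ((K_U/K_L)·(M/β)/(1-α_fp))²/2) / Γ(d/2)`. -/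
theorem statement6 {Ω : Type*} [MeasureSpace Ω] [IsProbabilityMeasure (ℙ : Measure Ω)]
    {d y : ℕ} (hd : 0 < d) {β : ℝ} (hβ : 0 < β)
    (H : EuclideanSpace ℝ (Fin d) → EuclideanSpace ℝ (Fin y))
    (KL KU : ℝ) (hKL : 0 < KL) (hKLU : KL ≤ KU)
    (hlip : ∀ u v : EuclideanSpace ℝ (Fin d),
      KL * ‖u - v‖ ≤ ‖H u - H v‖ ∧ ‖H u - H v‖ ≤ KU * ‖u - v‖)
    (x x₁ x₂ δ : Ω → EuclideanSpace ℝ (Fin d))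
    (hδmeas : ∀ i, Measurable fun ω => δ ω i)
    (hδindep : iIndepFun (fun i ω => δ ω i) ℙ)
    (hδdist : ∀ i, Measure.map (fun ω => δ ω i) ℙ = gaussianReal 0 (β ^ 2).toNNReal)
    (hxmeas : Measurable fun ω => ‖x₁ ω - x₂ ω‖)
    (hint : Integrable (fun ω => ‖x₁ ω - x₂ ω‖) ℙ)
    (M : ℝ) (hM : M = ∫ ω, ‖x₁ ω - x₂ ω‖)
    (τ : ℝ) (hτ : 0 < τ) (αdet αfp : ℝ)
    (hαdet : αdet = (ℙ {ω | ‖H (x ω) - H (x ω + δ ω)‖ ≤ τ}).toReal)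
    (hαfp : αfp = (ℙ {ω | ‖H (x₁ ω) - H (x₂ ω)‖ ≤ τ}).toReal)
    (hαfp1 : αfp < 1) :
    αdet ≤ lowerIncompleteGamma (d / 2)
        ((KU / KL * (M / β) * (1 / (1 - αfp))) ^ 2 / 2) / Real.Gamma (d / 2) := by
  have hKU : 0 < KU := lt_of_lt_of_le hKL hKLU
  set c : ℝ := τ / KL with hc
  have hc0 : 0 ≤ c := by positivity
  -- Step A
  have hsub : {ω | ‖H (x ω) - H (x ω + δ ω)‖ ≤ τ} ⊆ {ω | ‖δ ω‖ ≤ c} := by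
    intro ω hω
    have h1 := (hlip (x ω) (x ω + δ ω)).1
    have h2 : ‖x ω - (x ω + δ ω)‖ = ‖δ ω‖ := by
      rw [show x ω - (x ω + δ ω) = -δ ω by abel, norm_neg]
    rw [h2] at h1
    rw [mem_setOf_eq, hc, le_div_iff₀ hKL, mul_comm]
    exact h1.trans hω
  have hstepA : αdet ≤ (ℙ {ω | ‖δ ω‖ ≤ c}).toReal := by
    rw [hαdet]
    exact ENNReal.toReal_mono (measure_ne_top _ _) (measure_mono hsub)
  -- chi CDF
  have hchi : (ℙ {ω | ‖δ ω‖ ≤ c}).toReal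
      = lowerIncompleteGamma ((d:ℝ) / 2) (c ^ 2 / (2 * β ^ 2)) / Real.Gamma ((d:ℝ) / 2) := by
    rw [prob_norm_le hβ δ hδmeas hδindep hδdist c, chi_cdf hd hβ hc0]
  -- Markov
  have hM0 : 0 ≤ M := hM ▸ integral_nonneg fun ω => norm_nonneg _
  have h1αfp : 0 < 1 - αfp := by linarith
  have hmarkov : τ * (1 - αfp) ≤ KU * M := by
    set B : Set Ω := {ω | τ / KU ≤ ‖x₁ ω - x₂ ω‖} with hB
    have hcover : (univ : Set Ω) ⊆ {ω | ‖H (x₁ ω) - H (x₂ ω)‖ ≤ τ} ∪ B := by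
      intro ω _
      by_cases hωB : ω ∈ B
      · exact Or.inr hωB
      · left
        have h2 := (hlip (x₁ ω) (x₂ ω)).2
        rw [hB, mem_setOf_eq, not_le] at hωB
        have : KU * ‖x₁ ω - x₂ ω‖ ≤ τ := by
          rw [lt_div_iff₀ hKU] at hωB
          nlinarith [hωB]
        exact le_trans h2 this
    have hun : (1:ℝ≥0∞) ≤ ℙ {ω | ‖H (x₁ ω) - H (x₂ ω)‖ ≤ τ} + ℙ B :=
      le_trans (by rw [← measure_univ (μ := (ℙ : Measure Ω))]; exact measure_mono hcover)
        (measure_union_le _ _)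
    have hun' : (1:ℝ) ≤ αfp + (ℙ B).toReal := by
      have := ENNReal.toReal_mono (by
          exact ENNReal.add_ne_top.mpr ⟨measure_ne_top _ _, measure_ne_top _ _⟩) hun
      rwa [ENNReal.toReal_one, ENNReal.toReal_add (measure_ne_top _ _) (measure_ne_top _ _),
        ← hαfp] at this
    have hmkv : (τ / KU) * (ℙ B).toReal ≤ M := by
      rw [hM]
      exact mul_meas_ge_le_integral_of_nonneg (ae_of_all _ fun ω => norm_nonneg _) hint (τ / KU)
    have hBle : 1 - αfp ≤ (ℙ B).toReal := by linarith
    have : (τ / KU) * (1 - αfp) ≤ M :=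
      le_trans (by
        apply mul_le_mul_of_nonneg_left hBle
        positivity) hmkv
    rw [div_mul_eq_mul_div, div_le_iff₀ hKU] at this
    linarith
  -- bound the argument
  have harg : c ^ 2 / (2 * β ^ 2) ≤ (KU / KL * (M / β) * (1 / (1 - αfp))) ^ 2 / 2 := by
    have ha : c / β ≤ KU / KL * (M / β) * (1 / (1 - αfp)) := by
      rw [hc, div_div, div_le_iff₀ (by positivity)]
      have hrhs : KU / KL * (M / β) * (1 / (1 - αfp)) * (KL * β)
          = KU * M / (1 - αfp) := by field_simp
      rw [hrhs, le_div_iff₀ h1αfp]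
      nlinarith [hmarkov]
    have ha0 : 0 ≤ c / β := by positivity
    have := pow_le_pow_left₀ ha0 ha 2
    calc c ^ 2 / (2 * β ^ 2) = (c / β) ^ 2 / 2 := by field_simp
    _ ≤ (KU / KL * (M / β) * (1 / (1 - αfp))) ^ 2 / 2 := by linarith
  have hd2 : (0:ℝ) < (d:ℝ) / 2 := by positivity
  have hΓ : 0 < Real.Gamma ((d:ℝ) / 2) := Real.Gamma_pos_of_pos hd2
  calc αdet ≤ (ℙ {ω | ‖δ ω‖ ≤ c}).toReal := hstepA
  _ = lowerIncompleteGamma ((d:ℝ) / 2) (c ^ 2 / (2 * β ^ 2)) / Real.Gamma ((d:ℝ) / 2) := hchi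
  _ ≤ lowerIncompleteGamma ((d:ℝ) / 2) ((KU / KL * (M / β) * (1 / (1 - αfp))) ^ 2 / 2)
      / Real.Gamma ((d:ℝ) / 2) := by
    gcongr
    exact lig_mono hd2 harg
  _ = _ := rfl
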